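/- Let b > 0, V ≥ 0, v ≥ 0 be real numbers, and let p, o : ℝ → ℝ × ℝ be functions that are differentiable on [0, v/b] (where ℝ × ℝ carries the supremum norm), with ‖p′(t)‖ ≤ v − b·t and ‖o′(t)‖ ≤ V for all t ∈ [0, v/b]. If ‖p(0) − o(0)‖ > v²/(2b) + V·v/b, then p(t) ≠ o(t) for all t ∈ [0, v/b]. -/

import Mathlib

/-- A braking robot (speed at most `v − b·t`, stopping at time `v/b`) cannot
collide with an obstacle moving at speed at most `V` if the passive-safety
margin `‖p(0) − o(0)‖ > v²/(2b) + V·v/b` holds initially (sup norm on ℝ²). -/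
theorem braking_passive_safety
    (b V v : ℝ) (hb : 0 < b) (hV : 0 ≤ V) (hv : 0 ≤ v)
    (p o : ℝ → ℝ × ℝ) (p' o' : ℝ → ℝ × ℝ)
    (hp : ∀ t ∈ Set.Icc (0 : ℝ) (v / b),
      HasDerivWithinAt p (p' t) (Set.Icc (0 : ℝ) (v / b)) t)
    (ho : ∀ t ∈ Set.Icc (0 : ℝ) (v / b),
      HasDerivWithinAt o (o' t) (Set.Icc (0 : ℝ) (v / b)) t)
    (hp' : ∀ t ∈ Set.Icc (0 : ℝ) (v / b), ‖p' t‖ ≤ v - b * t)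
    (ho' : ∀ t ∈ Set.Icc (0 : ℝ) (v / b), ‖o' t‖ ≤ V)
    (hinit : ‖p 0 - o 0‖ > v ^ 2 / (2 * b) + V * v / b) :
    ∀ t ∈ Set.Icc (0 : ℝ) (v / b), p t ≠ o t := by
  intro t ht heq
  -- bound on obstacle displacement
  have hobs : ∀ x ∈ Set.Icc (0 : ℝ) (v / b), ‖o x - o 0‖ ≤ V * (x - 0) :=
    norm_image_sub_le_of_norm_deriv_le_segment' ho
      (fun x hx => ho' x (Set.Ico_subset_Icc_self hx))
  -- bound on robot displacement via fencing theorem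
  have hrob : ∀ x ∈ Set.Icc (0 : ℝ) (v / b),
      ‖p x - p 0‖ ≤ v * x - b * x ^ 2 / 2 := by
    have hg' : ∀ x ∈ Set.Ico (0 : ℝ) (v / b),
        HasDerivWithinAt (fun s => p s - p 0) (p' x) (Set.Ici x) x := by
      intro x hx
      have := ((hp x (Set.Ico_subset_Icc_self hx)).sub
        (hasDerivWithinAt_const x _ (p 0))).mono_of_mem_nhdsWithin
        (Icc_mem_nhdsGE_of_mem hx)
      rw [sub_zero] at this
      exact this
    have hB : ∀ x : ℝ, HasDerivAt (fun s => v * s - b * s ^ 2 / 2) (v - b * x) x := by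
      intro x
      have h1 : HasDerivAt (fun s : ℝ => v * s) v x := by
        simpa using (hasDerivAt_id x).const_mul v
      have h2 : HasDerivAt (fun s : ℝ => b * s ^ 2 / 2) (b * x) x := by
        have := ((hasDerivAt_pow 2 x).const_mul b).div_const 2
        refine this.congr_deriv ?_
        ring
      exact h1.sub h2
    have := image_norm_le_of_norm_deriv_right_le_deriv_boundary
      (f := fun s => p s - p 0)
      (fun x hx => ((hp x hx).sub (hasDerivWithinAt_const x _ (p 0))).continuousWithinAt)
      hg' (by simp) hB (fun x hx => hp' x (Set.Ico_subset_Icc_self hx))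
    intro x hx
    simpa using this hx
  obtain ⟨ht0, ht1⟩ := ht
  have h1 := hrob t ⟨ht0, ht1⟩
  have h2 := hobs t ⟨ht0, ht1⟩
  have hdist : ‖p 0 - o 0‖ ≤ ‖p t - p 0‖ + ‖o t - o 0‖ := by
    have : p 0 - o 0 = (o t - o 0) - (p t - p 0) := by rw [heq]; ring
    rw [this]
    calc ‖(o t - o 0) - (p t - p 0)‖ ≤ ‖o t - o 0‖ + ‖p t - p 0‖ := norm_sub_le _ _
    _ = _ := by ring
  have htb : b * t ≤ v := by rw [le_div_iff₀ hb] at ht1; linarith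
  have hbound1 : v * t - b * t ^ 2 / 2 ≤ v ^ 2 / (2 * b) := by
    rw [le_div_iff₀ (by linarith : (0:ℝ) < 2 * b)]
    nlinarith [sq_nonneg (v - b * t)]
  have hbound2 : V * (t - 0) ≤ V * v / b := by
    rw [sub_zero, div_eq_mul_inv, mul_assoc]
    apply mul_le_mul_of_nonneg_left _ hV
    rw [← div_eq_mul_inv]
    exact ht1
  linarith
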